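/- arXiv:2009.03967 — 3 statements merged into one kernel-verified Lean document; each statement's English description precedes it below -/
import Mathlib

section
/- Suppose u(t,·) is in H^n(𝕋^d) but not in H^{n+1}(𝕋^d) for some t > 0, and let V_m(t,x) = e_m + Σ_k (-i k_m t) u_k(t) e^{ik·x}. Then there exists m ∈ {1,…,d} such that ‖V_m(t,·)‖_{H^n} = ∞. -/
open scoped ENNReal

/-- `|k|²` for a frequency `k ∈ ℤᵈ`, as an extended nonnegative real. -/
noncomputable def kSq {d : ℕ} (k : Fin d → ℤ) : ℝ≥0∞ := ∑ m, ((k m).natAbs : ℝ≥0∞) ^ 2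

/-- The Sobolev weight `1 + |k|² + ⋯ + |k|^{2n}`. -/
noncomputable def sobWeight {d : ℕ} (n : ℕ) (k : Fin d → ℤ) : ℝ≥0∞ :=
  ∑ j ∈ Finset.range (n + 1), kSq k ^ j

/-- Squared Sobolev `Hⁿ` norm on the torus in terms of Fourier coefficients:
`‖v‖_{Hⁿ}² = (2π)ᵈ Σ_k (1 + |k|² + ⋯ + |k|^{2n}) |v_k|²` (possibly `+∞`). -/
noncomputable def hSobSq {d : ℕ} (n : ℕ) (v : (Fin d → ℤ) → Fin d → ℂ) : ℝ≥0∞ :=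
  ENNReal.ofReal ((2 * Real.pi) ^ d) * ∑' k : Fin d → ℤ, sobWeight n k * (‖v k‖₊ : ℝ≥0∞) ^ 2

/-- Fourier coefficients of `V_m(t,x) = e_m + Σ_k (-i k_m t) u_k e^{i k·x}`. -/
noncomputable def vCoef {d : ℕ} (t : ℝ) (v : (Fin d → ℤ) → Fin d → ℂ) (m : Fin d)
    (k : Fin d → ℤ) : Fin d → ℂ :=
  ((-Complex.I * (k m : ℂ) * (t : ℂ)) • v k) +
    (if k = 0 then (fun j => if j = m then 1 else 0) else 0)

lemma nn_int_coe (z : ℤ) : (‖(z : ℂ)‖₊ : ℝ≥0∞) = ((z.natAbs : ℝ≥0∞)) := by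
  rw [Complex.nnnorm_intCast, ← NNReal.natCast_natAbs]
  simp

/-- If `u(t,·)` is in `Hⁿ(𝕋ᵈ)` but not in `Hⁿ⁺¹(𝕋ᵈ)` and `t > 0`, then some directional
derivative `V_m(t,x) = e_m + Σ_k (-i k_m t) u_k(t) e^{ik·x}` has infinite `Hⁿ` norm. -/
theorem exists_vCoef_hSob_eq_top {d n : ℕ} (t : ℝ) (ht : 0 < t)
    (v : (Fin d → ℤ) → Fin d → ℂ)
    (hHn : hSobSq n v ≠ ⊤) (hHn1 : hSobSq (n + 1) v = ⊤) :
    ∃ m : Fin d, hSobSq n (vCoef t v m) = ⊤ := by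
  classical
  set c := ENNReal.ofReal ((2 * Real.pi) ^ d) with hc
  have hc0 : c ≠ 0 := by
    rw [hc, Ne, ENNReal.ofReal_eq_zero, not_le]
    positivity
  have hcT : c ≠ ⊤ := ENNReal.ofReal_ne_top
  have hS0 : ∑' k : Fin d → ℤ, sobWeight n k * (‖v k‖₊ : ℝ≥0∞) ^ 2 ≠ ⊤ := by
    intro h
    exact hHn (by rw [hSobSq, ← hc, h, ENNReal.mul_top hc0])
  have hS1 : ∑' k : Fin d → ℤ, sobWeight (n + 1) k * (‖v k‖₊ : ℝ≥0∞) ^ 2 = ⊤ := by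
    rcases ENNReal.mul_eq_top.mp hHn1 with h | h
    · exact h.2
    · exact absurd h.1 hcT
  have hsplit : ∀ k : Fin d → ℤ, sobWeight (n + 1) k * (‖v k‖₊ : ℝ≥0∞) ^ 2
      = sobWeight n k * (‖v k‖₊ : ℝ≥0∞) ^ 2 + kSq k ^ (n + 1) * (‖v k‖₊ : ℝ≥0∞) ^ 2 := by
    intro k
    rw [sobWeight, Finset.sum_range_succ, add_mul]
    rfl
  rw [tsum_congr hsplit, ENNReal.tsum_add] at hS1
  have hT : ∑' k : Fin d → ℤ, kSq k ^ (n + 1) * (‖v k‖₊ : ℝ≥0∞) ^ 2 = ⊤ := by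
    rcases ENNReal.add_eq_top.mp hS1 with h | h
    · exact absurd h hS0
    · exact h
  -- expand over coordinates
  have hexp : ∀ k : Fin d → ℤ, kSq k ^ (n + 1) * (‖v k‖₊ : ℝ≥0∞) ^ 2
      = ∑ m : Fin d, kSq k ^ n * ((k m).natAbs : ℝ≥0∞) ^ 2 * (‖v k‖₊ : ℝ≥0∞) ^ 2 := by
    intro k
    rw [pow_succ, show kSq k ^ n * kSq k = ∑ m : Fin d, kSq k ^ n * ((k m).natAbs : ℝ≥0∞) ^ 2 from
      by rw [kSq, Finset.mul_sum], Finset.sum_mul]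
  rw [tsum_congr hexp, Summable.tsum_finsetSum (fun _ _ => ENNReal.summable)] at hT
  obtain ⟨m, -, hm⟩ := ENNReal.sum_eq_top.mp hT
  refine ⟨m, ?_⟩
  rw [hSobSq, ← hc, ENNReal.mul_eq_top]
  left
  refine ⟨hc0, ?_⟩
  have key : ∀ k : Fin d → ℤ,
      (‖t‖₊ : ℝ≥0∞) ^ 2 * (kSq k ^ n * ((k m).natAbs : ℝ≥0∞) ^ 2 * (‖v k‖₊ : ℝ≥0∞) ^ 2)
        ≤ sobWeight n k * (‖vCoef t v m k‖₊ : ℝ≥0∞) ^ 2 := by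
    intro k
    by_cases hk : k = 0
    · subst hk
      simp
    · have hv : vCoef t v m k = (-Complex.I * (k m : ℂ) * (t : ℂ)) • v k := by
        simp [vCoef, hk]
      have hnorm : (‖vCoef t v m k‖₊ : ℝ≥0∞)
          = ((k m).natAbs : ℝ≥0∞) * (‖t‖₊ : ℝ≥0∞) * (‖v k‖₊ : ℝ≥0∞) := by
        rw [hv, nnnorm_smul]
        push_cast
        rw [nnnorm_mul, nnnorm_mul, nnnorm_neg, Complex.nnnorm_I, one_mul]
        rw [Complex.nnnorm_real]
        exact congrArg (· * (‖t‖₊ : ℝ≥0∞) * (‖v k‖₊ : ℝ≥0∞)) (nn_int_coe (k m))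
      have hsob : kSq k ^ n ≤ sobWeight n k := by
        rw [sobWeight]
        exact Finset.single_le_sum (f := fun j => kSq k ^ j) (fun _ _ => zero_le)
          (Finset.self_mem_range_succ n)
      calc (‖t‖₊ : ℝ≥0∞) ^ 2 * (kSq k ^ n * ((k m).natAbs : ℝ≥0∞) ^ 2 * (‖v k‖₊ : ℝ≥0∞) ^ 2)
          = kSq k ^ n * (((k m).natAbs : ℝ≥0∞) * (‖t‖₊ : ℝ≥0∞) * (‖v k‖₊ : ℝ≥0∞)) ^ 2 := by ring
        _ ≤ sobWeight n k * (‖vCoef t v m k‖₊ : ℝ≥0∞) ^ 2 := by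
            rw [hnorm]; exact mul_le_mul_left hsob _
  have hle := ENNReal.tsum_le_tsum key
  rw [ENNReal.tsum_mul_left, hm, ENNReal.mul_top] at hle
  · exact top_le_iff.mp hle
  · simp [pow_eq_zero_iff, nnnorm_eq_zero, ne_of_gt ht]
end

section
/- For 1/2 < γ ≤ 1, σ ∈ ℝ, and Re ∈ (0, ∞], the velocity field u₁(t,x₂) = Σ_{n=1}^∞ n^{−(3+γ)} e^{−n²t/Re} sin(n(x₂ − σt)), u₂ = σ, together with constant pressure, is an exact solution of the 2D Navier–Stokes equations (Euler equations when Re = ∞) on the torus [0,2π]². -/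
/-- Time partial derivative. -/
noncomputable def ptd (g : ℝ → ℝ × ℝ → ℝ) (t : ℝ) (x : ℝ × ℝ) : ℝ := deriv (fun s => g s x) t

/-- Spatial partial derivative in `x₁`. -/
noncomputable def px1 (g : ℝ × ℝ → ℝ) (x : ℝ × ℝ) : ℝ := deriv (fun y => g (y, x.2)) x.1

/-- Spatial partial derivative in `x₂`. -/
noncomputable def px2 (g : ℝ × ℝ → ℝ) (x : ℝ × ℝ) : ℝ := deriv (fun y => g (x.1, y)) x.2

/-- The first velocity component
`u₁(t,x₂) = Σ_{n≥1} n^{-(3+γ)} e^{-n² ν t} sin(n(x₂ - σ t))`, where `ν = 1/Re`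
(`ν = 0` is the Euler case `Re = ∞`). -/
noncomputable def shearU1 (γ σ ν : ℝ) (t : ℝ) (x : ℝ × ℝ) : ℝ :=
  ∑' n : ℕ, ((n : ℝ) + 1) ^ (-(3 + γ)) * Real.exp (-((n : ℝ) + 1) ^ 2 * ν * t) *
    Real.sin (((n : ℝ) + 1) * (x.2 - σ * t))

namespace ShearAux

noncomputable def cc (n : ℕ) : ℝ := (n : ℝ) + 1
lemma cc_pos (n : ℕ) : 0 < cc n := by unfold cc; positivity

lemma sumRpow {p : ℝ} (hp : 1 < p) : Summable fun n : ℕ => cc n ^ (-p) := by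
  have h : Summable fun n : ℕ => (n : ℝ) ^ (-p) := Real.summable_nat_rpow.2 (by linarith)
  have h2 := (summable_nat_add_iff 1).2 h
  unfold cc
  convert h2 using 2 with n
  push_cast
  rfl
  push_cast
  rfl

noncomputable def aa (γ : ℝ) (n : ℕ) : ℝ := cc n ^ (-(3 + γ))
lemma aa_pos (γ : ℝ) (n : ℕ) : 0 < aa γ n := Real.rpow_pos_of_pos (cc_pos n) _

lemma aa_mul_cc (γ : ℝ) (n : ℕ) : aa γ n * cc n = cc n ^ (-(2 + γ)) := by
  unfold aa
  nth_rewrite 2 [← Real.rpow_one (cc n)]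
  rw [← Real.rpow_add (cc_pos n)]
  congr 1; ring

lemma aa_mul_cc_sq (γ : ℝ) (n : ℕ) : aa γ n * cc n ^ 2 = cc n ^ (-(1 + γ)) := by
  unfold aa
  rw [← Real.rpow_natCast (cc n) 2, ← Real.rpow_add (cc_pos n)]
  congr 1; push_cast; ring

noncomputable def F (γ σ ν t : ℝ) (n : ℕ) (y : ℝ) : ℝ :=
  aa γ n * Real.exp (-cc n ^ 2 * ν * t) * Real.sin (cc n * (y - σ * t))

noncomputable def G1 (γ σ ν t : ℝ) (n : ℕ) (y : ℝ) : ℝ :=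
  aa γ n * Real.exp (-cc n ^ 2 * ν * t) * (cc n * Real.cos (cc n * (y - σ * t)))

noncomputable def G2 (γ σ ν t : ℝ) (n : ℕ) (y : ℝ) : ℝ :=
  -(aa γ n * Real.exp (-cc n ^ 2 * ν * t) * (cc n ^ 2 * Real.sin (cc n * (y - σ * t))))

noncomputable def D (γ σ ν x2 : ℝ) (n : ℕ) (s : ℝ) : ℝ :=
  ν * G2 γ σ ν s n x2 - σ * G1 γ σ ν s n x2

lemma hasDerivAt_F (γ σ ν t : ℝ) (n : ℕ) (y : ℝ) :
    HasDerivAt (F γ σ ν t n) (G1 γ σ ν t n y) y := by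
  have h := ((((hasDerivAt_id y).sub_const (σ * t)).const_mul (cc n)).sin).const_mul
    (aa γ n * Real.exp (-cc n ^ 2 * ν * t))
  refine h.congr_deriv ?_
  simp only [G1, id_eq]; ring

lemma hasDerivAt_G1 (γ σ ν t : ℝ) (n : ℕ) (y : ℝ) :
    HasDerivAt (G1 γ σ ν t n) (G2 γ σ ν t n y) y := by
  have h := ((((hasDerivAt_id y).sub_const (σ * t)).const_mul (cc n)).cos.const_mul
    (cc n)).const_mul (aa γ n * Real.exp (-cc n ^ 2 * ν * t))
  refine h.congr_deriv ?_
  simp only [G2, id_eq]; ring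

lemma hasDerivAt_time (γ σ ν x2 : ℝ) (n : ℕ) (s : ℝ) :
    HasDerivAt (fun s => aa γ n * Real.exp (-cc n ^ 2 * ν * s) *
      Real.sin (cc n * (x2 - σ * s))) (D γ σ ν x2 n s) s := by
  have h1 : HasDerivAt (fun s : ℝ => Real.exp (-cc n ^ 2 * ν * s))
      (Real.exp (-cc n ^ 2 * ν * s) * (-cc n ^ 2 * ν * 1)) s :=
    ((hasDerivAt_id s).const_mul (-cc n ^ 2 * ν)).exp
  have h2 : HasDerivAt (fun s : ℝ => Real.sin (cc n * (x2 - σ * s)))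
      (Real.cos (cc n * (x2 - σ * s)) * (cc n * (0 - σ * 1))) s :=
    (((hasDerivAt_const s x2).sub ((hasDerivAt_id s).const_mul σ)).const_mul (cc n)).sin
  have h := (h1.const_mul (aa γ n)).mul h2
  refine h.congr_deriv ?_
  simp only [D, G1, G2, id_eq]; ring

lemma exp_le_one (n : ℕ) {ν t : ℝ} (hν : 0 ≤ ν) (ht : 0 ≤ t) :
    Real.exp (-cc n ^ 2 * ν * t) ≤ 1 := by
  rw [Real.exp_le_one_iff]
  have h : 0 ≤ cc n ^ 2 * ν * t := by positivity
  nlinarith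

lemma norm_term_le {A e c s B : ℝ} (hA : 0 ≤ A) (he : 0 ≤ e) (he1 : e ≤ 1) (hc : 0 ≤ c)
    (hs : |s| ≤ 1) (hB : A * c = B) : ‖A * e * (c * s)‖ ≤ B := by
  rw [Real.norm_eq_abs, abs_mul, abs_mul, abs_mul, abs_of_nonneg hA, abs_of_nonneg he,
    abs_of_nonneg hc, ← hB]
  calc A * e * (c * |s|) ≤ A * 1 * (c * 1) := by gcongr
    _ = A * c := by ring

lemma norm_term_le' {A e s : ℝ} (hA : 0 ≤ A) (he : 0 ≤ e) (he1 : e ≤ 1) (hs : |s| ≤ 1) :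
    ‖A * e * s‖ ≤ A := by
  rw [Real.norm_eq_abs, abs_mul, abs_mul, abs_of_nonneg hA, abs_of_nonneg he]
  calc A * e * |s| ≤ A * 1 * 1 := by gcongr
    _ = A := by ring

lemma norm_F_le (γ σ : ℝ) {ν t : ℝ} (hν : 0 ≤ ν) (ht : 0 ≤ t) (n : ℕ) (y : ℝ) :
    ‖F γ σ ν t n y‖ ≤ aa γ n :=
  norm_term_le' (aa_pos γ n).le (Real.exp_pos _).le (exp_le_one n hν ht)
    (Real.abs_sin_le_one _)

lemma norm_G1_le (γ σ : ℝ) {ν t : ℝ} (hν : 0 ≤ ν) (ht : 0 ≤ t) (n : ℕ) (y : ℝ) :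
    ‖G1 γ σ ν t n y‖ ≤ cc n ^ (-(2 + γ)) :=
  norm_term_le (aa_pos γ n).le (Real.exp_pos _).le (exp_le_one n hν ht) (cc_pos n).le
    (Real.abs_cos_le_one _) (aa_mul_cc γ n)

lemma norm_G2_le (γ σ : ℝ) {ν t : ℝ} (hν : 0 ≤ ν) (ht : 0 ≤ t) (n : ℕ) (y : ℝ) :
    ‖G2 γ σ ν t n y‖ ≤ cc n ^ (-(1 + γ)) := by
  rw [G2, norm_neg]
  exact norm_term_le (aa_pos γ n).le (Real.exp_pos _).le (exp_le_one n hν ht)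
    (by positivity) (Real.abs_sin_le_one _) (aa_mul_cc_sq γ n)

lemma norm_D_le (γ : ℝ) {σ ν x2 s : ℝ} (hν : 0 ≤ ν) (hs : 0 ≤ s) (n : ℕ) :
    ‖D γ σ ν x2 n s‖ ≤ ν * cc n ^ (-(1 + γ)) + |σ| * cc n ^ (-(2 + γ)) := by
  unfold D
  calc ‖ν * G2 γ σ ν s n x2 - σ * G1 γ σ ν s n x2‖
      ≤ ‖ν * G2 γ σ ν s n x2‖ + ‖σ * G1 γ σ ν s n x2‖ := norm_sub_le _ _
    _ ≤ ν * cc n ^ (-(1 + γ)) + |σ| * cc n ^ (-(2 + γ)) := by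
        rw [norm_mul, norm_mul, Real.norm_eq_abs ν, abs_of_nonneg hν, Real.norm_eq_abs σ]
        gcongr
        · exact norm_G2_le γ σ hν hs n x2
        · exact norm_G1_le γ σ hν hs n x2

variable {γ σ ν t : ℝ}

lemma summable_F (hγ : 1 / 2 < γ) (hν : 0 ≤ ν) (ht : 0 ≤ t) (y : ℝ) :
    Summable fun n => F γ σ ν t n y :=
  Summable.of_norm_bounded (sumRpow (by linarith : (1:ℝ) < 3 + γ))
    (fun n => norm_F_le γ σ hν ht n y)

lemma summable_G1 (hγ : 1 / 2 < γ) (hν : 0 ≤ ν) (ht : 0 ≤ t) (y : ℝ) :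
    Summable fun n => G1 γ σ ν t n y :=
  Summable.of_norm_bounded (sumRpow (by linarith : (1:ℝ) < 2 + γ))
    (fun n => norm_G1_le γ σ hν ht n y)

lemma summable_G2 (hγ : 1 / 2 < γ) (hν : 0 ≤ ν) (ht : 0 ≤ t) (y : ℝ) :
    Summable fun n => G2 γ σ ν t n y :=
  Summable.of_norm_bounded (sumRpow (by linarith : (1:ℝ) < 1 + γ))
    (fun n => norm_G2_le γ σ hν ht n y)

lemma hasDerivAt_sumF (hγ : 1 / 2 < γ) (hν : 0 ≤ ν) (ht : 0 ≤ t) (y : ℝ) :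
    HasDerivAt (fun z => ∑' n, F γ σ ν t n z) (∑' n, G1 γ σ ν t n y) y :=
  hasDerivAt_tsum (sumRpow (by linarith : (1:ℝ) < 2 + γ))
    (fun n z => hasDerivAt_F γ σ ν t n z) (fun n z => norm_G1_le γ σ hν ht n z)
    (summable_F hγ hν ht 0) y

lemma hasDerivAt_sumG1 (hγ : 1 / 2 < γ) (hν : 0 ≤ ν) (ht : 0 ≤ t) (y : ℝ) :
    HasDerivAt (fun z => ∑' n, G1 γ σ ν t n z) (∑' n, G2 γ σ ν t n y) y :=
  hasDerivAt_tsum (sumRpow (by linarith : (1:ℝ) < 1 + γ))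
    (fun n z => hasDerivAt_G1 γ σ ν t n z) (fun n z => norm_G2_le γ σ hν ht n z)
    (summable_G1 hγ hν ht 0) y

lemma hasDerivAt_sumTime (hγ : 1 / 2 < γ) (hν : 0 ≤ ν) (ht : 0 < t) (x2 : ℝ) :
    HasDerivAt (fun s => ∑' n, aa γ n * Real.exp (-cc n ^ 2 * ν * s) *
      Real.sin (cc n * (x2 - σ * s))) (∑' n, D γ σ ν x2 n t) t := by
  have hsum : Summable fun n : ℕ =>
      ν * cc n ^ (-(1 + γ)) + |σ| * cc n ^ (-(2 + γ)) :=
    ((sumRpow (by linarith : (1:ℝ) < 1 + γ)).mul_left ν).add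
      ((sumRpow (by linarith : (1:ℝ) < 2 + γ)).mul_left |σ|)
  exact hasDerivAt_tsum_of_isPreconnected hsum isOpen_Ioi isPreconnected_Ioi
    (fun n s _ => hasDerivAt_time γ σ ν x2 n s)
    (fun n s hs => norm_D_le γ hν (le_of_lt hs) n) ht
    (summable_F hγ hν ht.le x2) ht

lemma tsum_D_eq (hγ : 1 / 2 < γ) (hν : 0 ≤ ν) (ht : 0 ≤ t) (x2 : ℝ) :
    ∑' n, D γ σ ν x2 n t =
      ν * (∑' n, G2 γ σ ν t n x2) - σ * (∑' n, G1 γ σ ν t n x2) := by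
  unfold D
  rw [Summable.tsum_sub ((summable_G2 hγ hν ht x2).mul_left ν) ((summable_G1 hγ hν ht x2).mul_left σ),
    tsum_mul_left, tsum_mul_left]

end ShearAux

open ShearAux
/-- For `1/2 < γ ≤ 1`, `σ ∈ ℝ` and `ν = 1/Re ∈ [0,∞)` (`ν = 0` being the Euler case
`Re = ∞`), the velocity field `u = (u₁, σ)` with
`u₁ = Σ_{n≥1} n^{-(3+γ)} e^{-n² ν t} sin(n(x₂ - σ t))` and constant (zero) pressure is an
exact solution of the 2D incompressible Navier–Stokes equations
`∂ₜ u - ν Δu = -∇p - (u·∇)u`, `∇·u = 0`, on the torus `[0,2π]²`. -/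
theorem shear_family_exact_solution (γ σ ν : ℝ) (hγ : 1 / 2 < γ) (hγ' : γ ≤ 1)
    (hν : 0 ≤ ν) :
    (∀ t : ℝ, 0 < t → ∀ x : ℝ × ℝ,
      ptd (shearU1 γ σ ν) t x -
          ν * (px1 (px1 (shearU1 γ σ ν t)) x + px2 (px2 (shearU1 γ σ ν t)) x) =
        -(px1 (fun _ : ℝ × ℝ => (0 : ℝ)) x) -
          (shearU1 γ σ ν t x * px1 (shearU1 γ σ ν t) x + σ * px2 (shearU1 γ σ ν t) x)) ∧
    (∀ t : ℝ, 0 < t → ∀ x : ℝ × ℝ,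
      ptd (fun _ _ => σ) t x -
          ν * (px1 (px1 (fun _ : ℝ × ℝ => σ)) x + px2 (px2 (fun _ : ℝ × ℝ => σ)) x) =
        -(px2 (fun _ : ℝ × ℝ => (0 : ℝ)) x) -
          (shearU1 γ σ ν t x * px1 (fun _ : ℝ × ℝ => σ) x +
            σ * px2 (fun _ : ℝ × ℝ => σ) x)) ∧
    (∀ t : ℝ, 0 < t → ∀ x : ℝ × ℝ,
      px1 (shearU1 γ σ ν t) x + px2 (fun _ : ℝ × ℝ => σ) x = 0) := by
  have hshear : ∀ t : ℝ, ∀ w y : ℝ, shearU1 γ σ ν t (w, y) = ∑' n, F γ σ ν t n y := by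
    intro t w y; rfl
  have hpx1 : ∀ t : ℝ, px1 (shearU1 γ σ ν t) = fun _ => (0 : ℝ) := by
    intro t; funext x
    unfold px1
    have : (fun y => shearU1 γ σ ν t (y, x.2)) = fun _ => ∑' n, F γ σ ν t n x.2 := by
      funext y; exact hshear t y x.2
    rw [this, deriv_const]
  have hpx2 : ∀ t : ℝ, 0 < t →
      px2 (shearU1 γ σ ν t) = fun x : ℝ × ℝ => ∑' n, G1 γ σ ν t n x.2 := by
    intro t ht; funext x
    unfold px2
    have : (fun y => shearU1 γ σ ν t (x.1, y)) = fun z => ∑' n, F γ σ ν t n z := by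
      funext y; exact hshear t x.1 y
    rw [this]
    exact (hasDerivAt_sumF hγ hν ht.le x.2).deriv
  refine ⟨?_, ?_, ?_⟩
  · intro t ht x
    have h22 : px2 (px2 (shearU1 γ σ ν t)) x = ∑' n, G2 γ σ ν t n x.2 := by
      rw [hpx2 t ht]
      unfold px2
      exact (hasDerivAt_sumG1 hγ hν ht.le x.2).deriv
    have h11 : px1 (px1 (shearU1 γ σ ν t)) x = 0 := by
      rw [hpx1 t]
      unfold px1
      rw [deriv_const]
    have htime : ptd (shearU1 γ σ ν) t x =
        ν * (∑' n, G2 γ σ ν t n x.2) - σ * (∑' n, G1 γ σ ν t n x.2) := by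
      unfold ptd
      have : (fun s => shearU1 γ σ ν s x) = fun s => ∑' n, aa γ n *
          Real.exp (-cc n ^ 2 * ν * s) * Real.sin (cc n * (x.2 - σ * s)) := by
        funext s; rfl
      rw [this, (hasDerivAt_sumTime hγ hν ht x.2).deriv, tsum_D_eq hγ hν ht.le x.2]
    rw [htime, h11, h22, hpx1 t, hpx2 t ht]
    simp only [px1, deriv_const]
    ring
  · intro t ht x
    have hc : ∀ k : ℝ, (px1 fun _ : ℝ × ℝ => k) = fun _ => (0:ℝ) := by
      intro k; funext x; unfold px1; rw [deriv_const]
    have hc2 : ∀ k : ℝ, (px2 fun _ : ℝ × ℝ => k) = fun _ => (0:ℝ) := by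
      intro k; funext x; unfold px2; rw [deriv_const]
    rw [hc σ, hc2 σ, hc 0, hc2 0]
    simp [ptd]
  · intro t ht x
    have hc2 : ∀ k : ℝ, (px2 fun _ : ℝ × ℝ => k) = fun _ => (0:ℝ) := by
      intro k; funext x; unfold px2; rw [deriv_const]
    rw [hpx1 t, hc2 σ]
    simp
end

section
/- Let ∂_σ u₁(t,x₂) = Σ_{n=1}^∞ (−t) n^{−(2+γ)} e^{−n²t/Re} cos(n(x₂ − σt)) and ∂_σ u₂ = 1 be the directional derivative in σ of the exact solution family. Then when Re = ∞ and 1/2 < γ ≤ 1, the H³ norm of (∂_σ u₁, ∂_σ u₂) is infinite for every t > 0. -/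
open scoped ENNReal

/-- In the Euler case (`Re = ∞`), for `1/2 < γ ≤ 1` and `t > 0`, the `H³` norm (squared,
computed from the Fourier coefficients `b_n = t n^{-(2+γ)}` of
`∂_σ u₁ = Σ_{n≥1} (-t) n^{-(2+γ)} cos(n(x₂ - σt))` together with the constant component
`∂_σ u₂ = 1`) of the directional derivative of the solution operator is infinite. -/
theorem euler_directional_derivative_H3_infinite (γ t : ℝ) (hγ : 1 / 2 < γ) (hγ' : γ ≤ 1)
    (ht : 0 < t) :
    ENNReal.ofReal (4 * Real.pi ^ 2) +
      ENNReal.ofReal Real.pi *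
        ∑' n : ℕ, (∑ j ∈ Finset.range 4, ((n : ℝ≥0∞) + 1) ^ (2 * j)) *
          ENNReal.ofReal (t * ((n : ℝ) + 1) ^ (-(2 + γ))) ^ 2 = ⊤ := by
  have hmain : (∑' n : ℕ, (∑ j ∈ Finset.range 4, ((n : ℝ≥0∞) + 1) ^ (2 * j)) *
      ENNReal.ofReal (t * ((n : ℝ) + 1) ^ (-(2 + γ))) ^ 2) = ⊤ := by
    rw [eq_top_iff]
    have hconst : (⊤ : ℝ≥0∞) = ∑' _ : ℕ, ENNReal.ofReal (t ^ 2) := by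
      rw [ENNReal.tsum_const_eq_top_of_ne_zero]
      simp only [ne_eq, ENNReal.ofReal_eq_zero, not_le]
      positivity
    rw [hconst]
    refine ENNReal.tsum_le_tsum fun n => ?_
    have h1 : (0:ℝ) < (n:ℝ) + 1 := by positivity
    have hb : (1:ℝ) ≤ (n:ℝ) + 1 := by simp [Nat.cast_nonneg]
    have hx : (0:ℝ) < ((n:ℝ) + 1) ^ (-(2 + γ)) := Real.rpow_pos_of_pos h1 _
    have hsq : ENNReal.ofReal (t * ((n:ℝ) + 1) ^ (-(2 + γ))) ^ 2
        = ENNReal.ofReal (t ^ 2 * ((n:ℝ) + 1) ^ (-(2 + γ) * 2)) := by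
      rw [← ENNReal.ofReal_pow (by positivity)]
      congr 1
      rw [mul_pow, ← Real.rpow_natCast (((n:ℝ) + 1) ^ (-(2 + γ))) 2,
        ← Real.rpow_mul h1.le]
      norm_num
    have hsum : ((n : ℝ≥0∞) + 1) ^ (2 * 3) ≤
        ∑ j ∈ Finset.range 4, ((n : ℝ≥0∞) + 1) ^ (2 * j) :=
      Finset.single_le_sum (f := fun j => ((n : ℝ≥0∞) + 1) ^ (2 * j))
        (fun _ _ => zero_le) (by norm_num)
    have hcast : ((n : ℝ≥0∞) + 1) ^ (2 * 3) = ENNReal.ofReal (((n:ℝ) + 1) ^ 6) := by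
      rw [ENNReal.ofReal_pow h1.le, ENNReal.ofReal_add (Nat.cast_nonneg n) zero_le_one,
        ENNReal.ofReal_natCast, ENNReal.ofReal_one]
    calc ENNReal.ofReal (t ^ 2)
        ≤ ((n : ℝ≥0∞) + 1) ^ (2 * 3) *
            ENNReal.ofReal (t * ((n:ℝ) + 1) ^ (-(2 + γ))) ^ 2 := by
          rw [hsq, hcast, ← ENNReal.ofReal_mul (by positivity)]
          apply ENNReal.ofReal_le_ofReal
          have e : ((n:ℝ) + 1) ^ (((6:ℕ):ℝ)) * ((n:ℝ) + 1) ^ (-(2 + γ) * 2)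
              = ((n:ℝ) + 1) ^ (2 - 2 * γ) := by
            rw [← Real.rpow_add h1]
            congr 1
            push_cast
            ring
          have hcomb : ((n:ℝ) + 1) ^ 6 * (t ^ 2 * ((n:ℝ) + 1) ^ (-(2 + γ) * 2))
              = t ^ 2 * ((n:ℝ) + 1) ^ (2 - 2 * γ) := by
            rw [← Real.rpow_natCast ((n:ℝ) + 1) 6]
            linear_combination t ^ 2 * e
          rw [hcomb]
          have h2 : (1:ℝ) ≤ ((n:ℝ) + 1) ^ (2 - 2 * γ) :=
            Real.one_le_rpow hb (by linarith)
          nlinarith [sq_nonneg t]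
      _ ≤ _ := mul_le_mul_left hsum _
  rw [hmain, ENNReal.mul_top (ENNReal.ofReal_pos.mpr Real.pi_pos).ne']
  simp
end
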